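/- Every vector in the linear span V of {φ₁, φ₂, φ₃, φ₄} in ℂ² ⊗ ℂ² ⊗ ℂ² that is a product vector (i.e., of the form u ⊗ v ⊗ w with u, v, w ∈ ℂ²) is a scalar multiple of one of φ₁, φ₂, φ₃, φ₄; equivalently, every nonzero vector of V other than the scalar multiples of the φ_j is entangled. In fact, every vector of V that factorizes as u ⊗ η with u ∈ ℂ² and η ∈ ℂ² ⊗ ℂ² (the bipartite cut {1} versus {2,3}) is a scalar multiple of some φ_j. -/

import Mathlib

noncomputable section

abbrev Q : Type := EuclideanSpace ℂ (Fin 2)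
abbrev Q2 : Type := EuclideanSpace ℂ (Fin 2 × Fin 2)
abbrev Q3 : Type := EuclideanSpace ℂ (Fin 2 × Fin 2 × Fin 2)

/-- standard basis vector of ℂ² -/
def ket2 (i : Fin 2) : Q := EuclideanSpace.single i 1

/-- the state |+⟩ -/
def plus : Q := (Real.sqrt 2 : ℂ)⁻¹ • (ket2 0 + ket2 1)

/-- the state |−⟩ -/
def minus : Q := (Real.sqrt 2 : ℂ)⁻¹ • (ket2 0 - ket2 1)

/-- elementary tensor of three qubit vectors, in ℂ² ⊗ ℂ² ⊗ ℂ² ≅ ℂ⁸ -/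
def tp3 (u v w : Q) : Q3 := WithLp.toLp 2 (fun p : Fin 2 × Fin 2 × Fin 2 => u p.1 * v p.2.1 * w p.2.2)

/-- a product vector in ℂ² ⊗ ℂ² ⊗ ℂ² -/
def IsProd3 (ξ : Q3) : Prop := ∃ u v w : Q, ξ = tp3 u v w

/-- the set of one-dimensional subspaces of `T` spanned by (nonzero) product vectors -/
def prodLines3 (T : Submodule ℂ Q3) : Set (Submodule ℂ Q3) :=
  {L | ∃ ξ : Q3, ξ ≠ 0 ∧ ξ ∈ T ∧ IsProd3 ξ ∧ L = Submodule.span ℂ {ξ}}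

/-- a factorized vector across the bipartite cut {1} | {2,3} -/
def cut1 (u : Q) (η : Q2) : Q3 := WithLp.toLp 2 (fun p : Fin 2 × Fin 2 × Fin 2 => u p.1 * η p.2)

/-- a factorized vector across the bipartite cut {2} | {1,3} -/
def cut2 (u : Q) (η : Q2) : Q3 := WithLp.toLp 2 (fun p : Fin 2 × Fin 2 × Fin 2 => u p.2.1 * η (p.1, p.2.2))

/-- a factorized vector across the bipartite cut {3} | {1,2} -/
def cut3 (u : Q) (η : Q2) : Q3 := WithLp.toLp 2 (fun p : Fin 2 × Fin 2 × Fin 2 => u p.2.2 * η (p.1, p.2.1))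

def φ₁ : Q3 := tp3 (ket2 0) (ket2 1) plus
def φ₂ : Q3 := tp3 (ket2 1) plus (ket2 0)
def φ₃ : Q3 := tp3 plus (ket2 0) (ket2 1)
def φ₄ : Q3 := tp3 minus minus minus

/-- the span of the three-qubit UPB of Bennett et al. -/
def V3 : Submodule ℂ Q3 := Submodule.span ℂ {φ₁, φ₂, φ₃, φ₄}

/-- the orthogonal complement of the span of the three-qubit UPB -/
def SV : Submodule ℂ Q3 := V3ᗮ


def sC : ℂ := (Real.sqrt 2 : ℂ)⁻¹

lemma hsC : sC ≠ 0 := by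
  simp [sC, Real.sqrt_eq_zero']

lemma key : ∀ ψ ∈ V3, (∃ (u : Q) (η : Q2), ψ = cut1 u η) →
      ∃ c : ℂ, ψ = c • φ₁ ∨ ψ = c • φ₂ ∨ ψ = c • φ₃ ∨ ψ = c • φ₄ := by
  intro ψ hmem hcut
  rw [V3] at hmem
  rcases Submodule.mem_span_insert.mp hmem with ⟨k1, w1, hw1, h1⟩
  rcases Submodule.mem_span_insert.mp hw1 with ⟨k2, w2, hw2, h2⟩
  rcases Submodule.mem_span_insert.mp hw2 with ⟨k3, w3, hw3, h3⟩
  rcases Submodule.mem_span_singleton.mp hw3 with ⟨k4, h4⟩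
  have hdecomp : ψ = k1 • φ₁ + (k2 • φ₂ + (k3 • φ₃ + k4 • φ₄)) := by
    rw [h1, h2, h3, ← h4]
  rcases hcut with ⟨u, η, hcut⟩
  have h000 : ψ (0,0,0) = k4 * sC ^ 3 := by
    rw [hdecomp]; simp [φ₁, φ₂, φ₃, φ₄, tp3, plus, minus, ket2, sC, EuclideanSpace.single_apply] <;> first | ring1 | exact Or.inl (by ring)
  have h001 : ψ (0,0,1) = k3 * sC - k4 * sC ^ 3 := by
    rw [hdecomp]; simp [φ₁, φ₂, φ₃, φ₄, tp3, plus, minus, ket2, sC, EuclideanSpace.single_apply] <;> first | ring1 | exact Or.inl (by ring)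
  have h010 : ψ (0,1,0) = k1 * sC - k4 * sC ^ 3 := by
    rw [hdecomp]; simp [φ₁, φ₂, φ₃, φ₄, tp3, plus, minus, ket2, sC, EuclideanSpace.single_apply] <;> first | ring1 | exact Or.inl (by ring)
  have h011 : ψ (0,1,1) = k1 * sC + k4 * sC ^ 3 := by
    rw [hdecomp]; simp [φ₁, φ₂, φ₃, φ₄, tp3, plus, minus, ket2, sC, EuclideanSpace.single_apply] <;> first | ring1 | exact Or.inl (by ring)
  have h100 : ψ (1,0,0) = k2 * sC - k4 * sC ^ 3 := by
    rw [hdecomp]; simp [φ₁, φ₂, φ₃, φ₄, tp3, plus, minus, ket2, sC, EuclideanSpace.single_apply] <;> first | ring1 | exact Or.inl (by ring)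
  have h101 : ψ (1,0,1) = k3 * sC + k4 * sC ^ 3 := by
    rw [hdecomp]; simp [φ₁, φ₂, φ₃, φ₄, tp3, plus, minus, ket2, sC, EuclideanSpace.single_apply] <;> first | ring1 | exact Or.inl (by ring)
  have h110 : ψ (1,1,0) = k2 * sC + k4 * sC ^ 3 := by
    rw [hdecomp]; simp [φ₁, φ₂, φ₃, φ₄, tp3, plus, minus, ket2, sC, EuclideanSpace.single_apply] <;> first | ring1 | exact Or.inl (by ring)
  have h111 : ψ (1,1,1) = -(k4 * sC ^ 3) := by
    rw [hdecomp]; simp [φ₁, φ₂, φ₃, φ₄, tp3, plus, minus, ket2, sC, EuclideanSpace.single_apply] <;> first | ring1 | exact Or.inl (by ring)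
  have minor : ∀ p q : Fin 2 × Fin 2, ψ (0, p) * ψ (1, q) = ψ (1, p) * ψ (0, q) := by
    intro p q; rw [hcut]; simp [cut1]; ring
  have e01 := minor (0,0) (0,1)
  have e02 := minor (0,0) (1,0)
  have e03 := minor (0,0) (1,1)
  have e12 := minor (0,1) (1,0)
  have e13 := minor (0,1) (1,1)
  rw [h000, h101, h100, h001] at e01
  rw [h000, h110, h100, h010] at e02
  rw [h000, h111, h100, h011] at e03
  rw [h001, h110, h101, h010] at e12
  rw [h001, h111, h101, h011] at e13
  have e23 := minor (1,0) (1,1)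
  rw [h010, h111, h110, h011] at e23
  have hAD : k1 * k4 * sC ^ 4 = 0 := by linear_combination (1/3 : ℂ) * e03 - (1/3 : ℂ) * e23
  have hBD : k2 * k4 * sC ^ 4 = 0 := by linear_combination (1/3 : ℂ) * e02 - (1/3 : ℂ) * e03
  have hCD : k3 * k4 * sC ^ 4 = 0 := by
    linear_combination (1/6 : ℂ) * e01 + (1/6 : ℂ) * e12 - (1/6 : ℂ) * e13
  have hAB : k1 * k2 * sC ^ 2 = 0 := by linear_combination -e03 + hAD - hBD
  have hBC : k2 * k3 * sC ^ 2 = 0 := by linear_combination -e01 + 2 * hCD + hBD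
  have hAC : k1 * k3 * sC ^ 2 = 0 := by linear_combination -e13 - 2 * hCD - hAD
  have hs2 : (sC : ℂ) ^ 2 ≠ 0 := pow_ne_zero _ hsC
  have hs4 : (sC : ℂ) ^ 4 ≠ 0 := pow_ne_zero _ hsC
  have o12 : k1 = 0 ∨ k2 = 0 := mul_eq_zero.mp ((mul_eq_zero.mp hAB).resolve_right hs2)
  have o13 : k1 = 0 ∨ k3 = 0 := mul_eq_zero.mp ((mul_eq_zero.mp hAC).resolve_right hs2)
  have o14 : k1 = 0 ∨ k4 = 0 := mul_eq_zero.mp ((mul_eq_zero.mp hAD).resolve_right hs4)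
  have o23 : k2 = 0 ∨ k3 = 0 := mul_eq_zero.mp ((mul_eq_zero.mp hBC).resolve_right hs2)
  have o24 : k2 = 0 ∨ k4 = 0 := mul_eq_zero.mp ((mul_eq_zero.mp hBD).resolve_right hs4)
  have o34 : k3 = 0 ∨ k4 = 0 := mul_eq_zero.mp ((mul_eq_zero.mp hCD).resolve_right hs4)
  by_cases hk1 : k1 = 0
  · by_cases hk2 : k2 = 0
    · by_cases hk3 : k3 = 0
      · exact ⟨k4, Or.inr (Or.inr (Or.inr (by rw [hdecomp, hk1, hk2, hk3]; simp)))⟩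
      · have hk4 := o34.resolve_left hk3
        exact ⟨k3, Or.inr (Or.inr (Or.inl (by rw [hdecomp, hk1, hk2, hk4]; simp)))⟩
    · have hk3 := o23.resolve_left hk2
      have hk4 := o24.resolve_left hk2
      exact ⟨k2, Or.inr (Or.inl (by rw [hdecomp, hk1, hk3, hk4]; simp))⟩
  · have hk2 := o12.resolve_left hk1
    have hk3 := o13.resolve_left hk1
    have hk4 := o14.resolve_left hk1
    exact ⟨k1, Or.inl (by rw [hdecomp, hk2, hk3, hk4]; simp)⟩

theorem statement4 :
    (∀ ψ ∈ V3, (∃ (u : Q) (η : Q2), ψ = cut1 u η) →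
      ∃ c : ℂ, ψ = c • φ₁ ∨ ψ = c • φ₂ ∨ ψ = c • φ₃ ∨ ψ = c • φ₄) ∧
    (∀ ψ ∈ V3, IsProd3 ψ →
      ∃ c : ℂ, ψ = c • φ₁ ∨ ψ = c • φ₂ ∨ ψ = c • φ₃ ∨ ψ = c • φ₄) := by
  refine ⟨key, fun ψ hψ hprod => key ψ hψ ?_⟩
  rcases hprod with ⟨u, v, w, h⟩
  refine ⟨u, (WithLp.toLp 2 (fun p : Fin 2 × Fin 2 => v p.1 * w p.2) : Q2), ?_⟩
  rw [h]; ext p; simp [tp3, cut1]; ring
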